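/- If C is a self-dual Z_4-code of length n, then the minimum norm of the lattice A_4(C) equals min{4, d_E(C)/4}, where d_E(C) is the minimum Euclidean weight of C. -/
import Mathlib


open scoped Classical

/-- The lattice `A₄(C) = (1/2){x ∈ ℤⁿ : x mod 4 ∈ C}`. -/
def A4 {n : ℕ} (C : Submodule (ZMod 4) (Fin n → ZMod 4)) : Set (Fin n → ℝ) :=
  {v | ∃ x : Fin n → ℤ, (∀ i, v i = (x i : ℝ) / 2) ∧
    (fun i => (x i : ZMod 4)) ∈ C}

/-- Euclidean weight of a vector over `ZMod 4`. -/
noncomputable def euclWt {n : ℕ} (c : Fin n → ZMod 4) : ℕ :=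
  ∑ i, (if c i = 1 then 1 else if c i = 2 then 4 else if c i = 3 then 1 else 0)

/-- Minimum Euclidean weight of a `ZMod 4`-code. -/
noncomputable def dE {n : ℕ} (C : Submodule (ZMod 4) (Fin n → ZMod 4)) : ℕ :=
  sInf {w | ∃ c ∈ C, c ≠ 0 ∧ euclWt c = w}

/-- Minimal-norm integer lift of an element of `ZMod 4`. -/
def lift4 : ZMod 4 → ℤ := fun b => if b = 1 then 1 else if b = 2 then 2 else if b = 3 then -1 else 0

lemma lift4_cast (b : ZMod 4) : ((lift4 b : ℤ) : ZMod 4) = b := by revert b; decide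

lemma lift4_wt (b : ZMod 4) : (lift4 b).natAbs ^ 2 =
    (if b = 1 then 1 else if b = 2 then 4 else if b = 3 then 1 else 0) := by revert b; decide

lemma lift4_ne (b : ZMod 4) (hb : b ≠ 0) : lift4 b ≠ 0 := by revert b; decide

lemma zmod4_cases (b : ZMod 4) : b = 0 ∨ b = 1 ∨ b = 2 ∨ b = 3 := by revert b; decide

lemma wt_le (a : ℤ) :
    (if (a : ZMod 4) = 1 then 1 else if (a : ZMod 4) = 2 then 4 else if (a : ZMod 4) = 3 then 1 else 0)
      ≤ a.natAbs ^ 2 := by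
  have hcast : ((a.natAbs : ℤ))^2 = a^2 := Int.natAbs_sq a
  have hdvd : ∀ k : ℤ, (a : ZMod 4) = (k : ZMod 4) → ∃ q : ℤ, a = 4 * q + k := by
    intro k hk
    have h0 : ((a - k : ℤ) : ZMod 4) = 0 := by push_cast; rw [hk]; ring
    obtain ⟨q, hq⟩ := (ZMod.intCast_zmod_eq_zero_iff_dvd _ 4).mp h0
    exact ⟨q, by push_cast at hq; linarith⟩
  rcases zmod4_cases ((a : ZMod 4)) with h|h|h|h
  · rw [h, if_neg (by decide), if_neg (by decide), if_neg (by decide)]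
    exact Nat.zero_le _
  · obtain ⟨q, hq⟩ := hdvd 1 (by rw [h]; decide)
    rw [h, if_pos rfl]
    have : (1:ℤ) ≤ (a.natAbs:ℤ)^2 := by
      rw [hcast]; rcases le_or_gt 0 q with h0|h0 <;> nlinarith
    exact_mod_cast this
  · obtain ⟨q, hq⟩ := hdvd 2 (by rw [h]; decide)
    rw [h, if_neg (by decide), if_pos rfl]
    have : (4:ℤ) ≤ (a.natAbs:ℤ)^2 := by
      rw [hcast]; rcases le_or_gt 0 q with h0|h0 <;> nlinarith
    exact_mod_cast this
  · obtain ⟨q, hq⟩ := hdvd 3 (by rw [h]; decide)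
    rw [h, if_neg (by decide), if_neg (by decide), if_pos rfl]
    have : (1:ℤ) ≤ (a.natAbs:ℤ)^2 := by
      rw [hcast]; rcases le_or_gt 0 q with h0|h0 <;> nlinarith
    exact_mod_cast this

theorem stmt9 (n : ℕ) (C : Submodule (ZMod 4) (Fin n → ZMod 4))
    (hsd : ∀ x : Fin n → ZMod 4, x ∈ C ↔ ∀ c ∈ C, ∑ i, x i * c i = 0) :
    sInf {r : ℝ | ∃ v ∈ A4 C, v ≠ 0 ∧ ∑ i, v i * v i = r}
      = min (4 : ℝ) ((dE C : ℝ) / 4) := by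
  rcases Nat.eq_zero_or_pos n with hn | hn
  · -- degenerate case n = 0 : both sides are 0
    subst hn
    have hTe : {r : ℝ | ∃ v ∈ A4 C, v ≠ 0 ∧ ∑ i, v i * v i = r} = ∅ := by
      ext r
      simp only [Set.mem_setOf_eq, Set.mem_empty_iff_false, iff_false, not_exists]
      rintro v ⟨_, hv, _⟩
      exact hv (funext fun i => i.elim0)
    have hdE : dE C = 0 := by
      have hW : {w | ∃ c ∈ C, c ≠ 0 ∧ euclWt c = w} = ∅ := by
        ext w
        simp only [Set.mem_setOf_eq, Set.mem_empty_iff_false, iff_false, not_exists]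
        rintro c ⟨_, hc, _⟩
        exact hc (funext fun i => i.elim0)
      rw [dE, hW, Nat.sInf_empty]
    rw [hTe, Real.sInf_empty, hdE]
    norm_num
  -- main case n > 0
  set i0 : Fin n := ⟨0, hn⟩ with hi0
  set S : Set ℕ :=
    {k | ∃ x : Fin n → ℤ, (fun i => ((x i : ℤ) : ZMod 4)) ∈ C ∧ x ≠ 0 ∧
      ∑ i, (x i).natAbs ^ 2 = k} with hS
  -- 16 belongs to S (via the vector (4,0,...,0))
  have h16 : 16 ∈ S := by
    refine ⟨fun i => if i = i0 then 4 else 0, ?_, ?_, ?_⟩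
    · convert C.zero_mem using 1
      funext i
      by_cases hi : i = i0 <;> simp [hi] <;>
        exact (by decide : ((4 : ZMod 4)) = 0)
    · intro h0
      have := congrFun h0 i0
      simp at this
    · show ∑ i, ((if i = i0 then (4:ℤ) else 0)).natAbs ^ 2 = 16
      rw [Finset.sum_congr rfl (fun i _ => by
        by_cases hi : i = i0 <;> simp [hi] :
        ∀ i ∈ Finset.univ, ((if i = i0 then (4:ℤ) else 0)).natAbs ^ 2
          = if i = i0 then 16 else 0)]
      rw [Finset.sum_ite_eq' Finset.univ i0 (fun _ => 16)]
      simp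
  have hSne : S.Nonempty := ⟨16, h16⟩
  -- the code contains a nonzero word
  have hCne : ∃ c, c ∈ C ∧ c ≠ 0 := by
    by_contra hco
    push_neg at hco
    have hall : ∀ x, x ∈ C := fun x => (hsd x).mpr (fun c hc => by
      rw [hco c hc]; simp)
    have h1 := hco (fun _ : Fin n => (1 : ZMod 4)) (hall _)
    have h2 := congrFun h1 i0
    exact absurd h2 (by decide : ¬((1 : ZMod 4) = (0 : ZMod 4)))
  have hWne : {w | ∃ c ∈ C, c ≠ 0 ∧ euclWt c = w}.Nonempty := by
    obtain ⟨c, hcC, hcne⟩ := hCne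
    exact ⟨euclWt c, c, hcC, hcne, rfl⟩
  -- dE C belongs to S (via the minimal lift of a minimal-weight word)
  have hdES : dE C ∈ S := by
    obtain ⟨c, hcC, hcne, hcw⟩ := Nat.sInf_mem hWne
    refine ⟨fun i => lift4 (c i), ?_, ?_, ?_⟩
    · have hz : (fun i => ((lift4 (c i) : ℤ) : ZMod 4)) = c :=
        funext fun i => lift4_cast (c i)
      show (fun i => ((lift4 (c i) : ℤ) : ZMod 4)) ∈ C
      rw [hz]; exact hcC
    · obtain ⟨j, hj⟩ := Function.ne_iff.mp hcne
      intro h0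
      exact lift4_ne (c j) hj (congrFun h0 j)
    · show ∑ i, (lift4 (c i)).natAbs ^ 2 = dE C
      rw [Finset.sum_congr rfl (fun i _ => lift4_wt (c i))]
      exact hcw
  -- lower bound for elements of S
  have hlow : ∀ k ∈ S, min 16 (dE C) ≤ k := by
    rintro k ⟨x, hxC, hxne, rfl⟩
    by_cases hc : (fun i => ((x i : ℤ) : ZMod 4)) = (0 : Fin n → ZMod 4)
    · obtain ⟨j, hj⟩ := Function.ne_iff.mp hxne
      have h4 : ((4:ℕ):ℤ) ∣ x j :=
        (ZMod.intCast_zmod_eq_zero_iff_dvd _ 4).mp (congrFun hc j)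
      have hd : 4 ∣ (x j).natAbs := by
        have := Int.natAbs_dvd_natAbs.mpr h4
        simpa using this
      have hle : 4 ≤ (x j).natAbs := Nat.le_of_dvd (Int.natAbs_pos.mpr hj) hd
      have h16le : 16 ≤ (x j).natAbs ^ 2 := by nlinarith
      calc min 16 (dE C) ≤ 16 := min_le_left _ _
        _ ≤ (x j).natAbs ^ 2 := h16le
        _ ≤ ∑ i, (x i).natAbs ^ 2 :=
            Finset.single_le_sum (f := fun i => (x i).natAbs ^ 2)
              (fun i _ => Nat.zero_le _) (Finset.mem_univ j)
    · have hwle : euclWt (fun i => ((x i : ℤ) : ZMod 4)) ≤ ∑ i, (x i).natAbs ^ 2 := by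
        unfold euclWt
        exact Finset.sum_le_sum fun i _ => wt_le (x i)
      have hdle : dE C ≤ euclWt (fun i => ((x i : ℤ) : ZMod 4)) :=
        Nat.sInf_le ⟨_, hxC, hc, rfl⟩
      exact le_trans (min_le_right _ _) (le_trans hdle hwle)
  have hmin : sInf S = min 16 (dE C) :=
    le_antisymm (le_min (Nat.sInf_le h16) (Nat.sInf_le hdES))
      (hlow _ (Nat.sInf_mem hSne))
  -- the set of norms is the image of S under k ↦ k/4
  have hsum : ∀ x : Fin n → ℤ,
      ∑ i, ((x i : ℝ)/2) * ((x i : ℝ)/2) = ((∑ i, (x i).natAbs ^ 2 : ℕ) : ℝ) / 4 := by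
    intro x
    rw [eq_div_iff (by norm_num : (4:ℝ) ≠ 0)]
    push_cast [Nat.cast_natAbs]
    rw [Finset.sum_mul]
    refine Finset.sum_congr rfl fun i _ => ?_
    rw [sq_abs]
    ring
  have hTS : {r : ℝ | ∃ v ∈ A4 C, v ≠ 0 ∧ ∑ i, v i * v i = r}
      = (fun k : ℕ => (k : ℝ) / 4) '' S := by
    ext r
    constructor
    · rintro ⟨v, ⟨x, hvx, hxC⟩, hvne, rfl⟩
      have hxne : x ≠ 0 := by
        rintro rfl
        apply hvne
        funext i
        rw [hvx i]
        simp
      refine ⟨∑ i, (x i).natAbs ^ 2, ⟨x, hxC, hxne, rfl⟩, ?_⟩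
      show ((∑ i, (x i).natAbs ^ 2 : ℕ) : ℝ) / 4 = ∑ i, v i * v i
      rw [← hsum x]
      exact Finset.sum_congr rfl fun i _ => by rw [hvx i]
    · rintro ⟨k, ⟨x, hxC, hxne, rfl⟩, rfl⟩
      refine ⟨fun i => (x i : ℝ)/2, ⟨x, fun i => rfl, hxC⟩, ?_, hsum x⟩
      obtain ⟨j, hj⟩ := Function.ne_iff.mp hxne
      intro h0
      apply hj
      have h1 := congrFun h0 j
      simp only [Pi.zero_apply, div_eq_zero_iff] at h1
      rcases h1 with h1 | h1
      · exact_mod_cast h1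
      · norm_num at h1
  -- compute the infimum of the image
  have hinf : sInf ((fun k : ℕ => (k : ℝ) / 4) '' S) = ((sInf S : ℕ) : ℝ) / 4 := by
    apply le_antisymm
    · exact csInf_le ⟨0, by rintro r ⟨k, _, rfl⟩; positivity⟩
        ⟨sInf S, Nat.sInf_mem hSne, rfl⟩
    · refine le_csInf ⟨_, ⟨sInf S, Nat.sInf_mem hSne, rfl⟩⟩ ?_
      rintro r ⟨k, hk, rfl⟩
      have h1 : sInf S ≤ k := Nat.sInf_le hk
      have h2 : ((sInf S : ℕ) : ℝ) ≤ (k : ℝ) := by exact_mod_cast h1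
      linarith
  rw [hTS, hinf, hmin, Nat.cast_min]
  push_cast
  rcases le_total (16:ℝ) ((dE C : ℝ)) with h | h
  · rw [min_eq_left h, min_eq_left (by linarith)]
    norm_num
  · rw [min_eq_right h, min_eq_right (by linarith)]
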